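/- For α > 1/2 and R > 0, the probability that two independent radial coordinates r_u, r_v each with density p(r) = α·sinh(α r)/(cosh(α R)−1) on [0,R] satisfy r_u + r_v < R is at most C·R·e^{−α R}·(cosh(α R)/(cosh(α R)−1))² · α for some absolute constant C; more precisely, ∫∫_{r_u+r_v<R} p(r_u)p(r_v) dr_u dr_v ≤ (α R sinh(α R)/2 + cosh(α R) − 1)/(cosh(α R) − 1)², and this bound is O(R e^{−α R}) as R → ∞. -/

import Mathlib

open Real intervalIntegral Filter

lemma inner_sinh_int (α : ℝ) (b : ℝ) :
    ∫ rv in (0:ℝ)..b, α * Real.sinh (α * rv) = Real.cosh (α * b) - 1 := by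
  have h : ∀ x ∈ Set.uIcc (0:ℝ) b,
      HasDerivAt (fun x => Real.cosh (α * x)) (α * Real.sinh (α * x)) x := by
    intro x _
    have := (Real.hasDerivAt_cosh (α * x)).comp x ((hasDerivAt_id x).const_mul α)
    exact this.congr_deriv (by ring)
  rw [intervalIntegral.integral_eq_sub_of_hasDerivAt h
    ((Continuous.intervalIntegrable (by continuity) _ _))]
  simp

lemma outer_int (α R : ℝ) :
    ∫ ru in (0:ℝ)..R, α * Real.sinh (α * ru) * (Real.cosh (α * (R - ru)) - 1)
      = α * R * Real.sinh (α * R) / 2 - (Real.cosh (α * R) - 1) := by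
  have h : ∀ x ∈ Set.uIcc (0:ℝ) R,
      HasDerivAt (fun r => α * Real.sinh (α * R) * r / 2
          + Real.cosh (α * (2 * r - R)) / 4 - Real.cosh (α * r))
        (α * Real.sinh (α * x) * (Real.cosh (α * (R - x)) - 1)) x := by
    intro x _
    have h1 : HasDerivAt (fun r : ℝ => α * Real.sinh (α * R) * r / 2)
        (α * Real.sinh (α * R) / 2) x := by
      simpa using ((hasDerivAt_id x).const_mul (α * Real.sinh (α * R))).div_const 2
    have h2 : HasDerivAt (fun r : ℝ => Real.cosh (α * (2 * r - R)) / 4)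
        (α * Real.sinh (α * (2 * x - R)) / 2) x := by
      have hl : HasDerivAt (fun r : ℝ => α * (2 * r - R)) (2 * α) x := by
        have : HasDerivAt (fun r : ℝ => 2 * r - R) 2 x := by
          simpa using ((hasDerivAt_id x).const_mul 2).sub_const R
        simpa [mul_comm] using this.const_mul α
      have := ((Real.hasDerivAt_cosh (α * (2 * x - R))).comp x hl).div_const 4
      refine this.congr_deriv ?_
      ring
    have h3 : HasDerivAt (fun r : ℝ => Real.cosh (α * r)) (α * Real.sinh (α * x)) x := by
      have := (Real.hasDerivAt_cosh (α * x)).comp x ((hasDerivAt_id x).const_mul α)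
      exact this.congr_deriv (by ring)
    have hsum := (h1.add h2).sub h3
    refine hsum.congr_deriv ?_
    have e1 : α * R = α * x + α * (R - x) := by ring
    have e2 : α * (2 * x - R) = α * x - α * (R - x) := by ring
    rw [e1, Real.sinh_add, e2, Real.sinh_sub]
    ring
  rw [intervalIntegral.integral_eq_sub_of_hasDerivAt h
    ((Continuous.intervalIntegrable (by continuity) _ _))]
  have e3 : α * (2 * R - R) = α * R := by ring
  have e4 : α * (2 * 0 - R) = -(α * R) := by ring
  rw [e3, e4, Real.cosh_neg]
  simp only [mul_zero, Real.cosh_zero]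
  ring

/-- For `α > 1/2`, the probability that two independent radial
coordinates with density `p(r) = α·sinh(α r)/(cosh(α R) − 1)` on `[0,R]` satisfy
`r_u + r_v < R` is at most `(α R sinh(α R)/2 + cosh(α R) − 1)/(cosh(α R) − 1)²`,
and this bound is `O(R e^{−α R})` as `R → ∞`. -/
theorem close_pair_probability_bound (α : ℝ) (hα : 1 / 2 < α) :
    (∀ R : ℝ, 0 < R →
      (∫ ru in (0 : ℝ)..R, ∫ rv in (0 : ℝ)..(R - ru),
          (α * Real.sinh (α * ru) / (Real.cosh (α * R) - 1)) *
            (α * Real.sinh (α * rv) / (Real.cosh (α * R) - 1)))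
        ≤ (α * R * Real.sinh (α * R) / 2 + Real.cosh (α * R) - 1)
            / (Real.cosh (α * R) - 1) ^ 2) ∧
    ∃ C : ℝ, 0 < C ∧ ∀ R : ℝ, 1 ≤ R →
      (α * R * Real.sinh (α * R) / 2 + Real.cosh (α * R) - 1)
          / (Real.cosh (α * R) - 1) ^ 2
        ≤ C * R * Real.exp (-α * R) := by
  have hα0 : 0 < α := by linarith
  constructor
  · intro R hR
    set c := Real.cosh (α * R) - 1 with hc
    have hc0 : 0 < c := by
      have : (1:ℝ) < Real.cosh (α * R) := Real.one_lt_cosh.2 (by positivity)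
      linarith
    have hinner : ∀ ru : ℝ,
        (∫ rv in (0:ℝ)..(R - ru),
            (α * Real.sinh (α * ru) / c) * (α * Real.sinh (α * rv) / c))
          = (1 / c ^ 2) * (α * Real.sinh (α * ru) * (Real.cosh (α * (R - ru)) - 1)) := by
      intro ru
      have : ∀ rv : ℝ, (α * Real.sinh (α * ru) / c) * (α * Real.sinh (α * rv) / c)
          = (α * Real.sinh (α * ru) / c ^ 2) * (α * Real.sinh (α * rv)) := by
        intro rv; rw [div_mul_div_comm, sq]; ring
      simp_rw [this]
      rw [intervalIntegral.integral_const_mul, inner_sinh_int]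
      ring
    calc (∫ ru in (0 : ℝ)..R, ∫ rv in (0 : ℝ)..(R - ru),
          (α * Real.sinh (α * ru) / c) * (α * Real.sinh (α * rv) / c))
        = ∫ ru in (0 : ℝ)..R,
            (1 / c ^ 2) * (α * Real.sinh (α * ru) * (Real.cosh (α * (R - ru)) - 1)) := by
          exact intervalIntegral.integral_congr (fun ru _ => hinner ru)
      _ = (1 / c ^ 2) * (α * R * Real.sinh (α * R) / 2 - c) := by
          rw [intervalIntegral.integral_const_mul, outer_int]
      _ = (α * R * Real.sinh (α * R) / 2 - c) / c ^ 2 := by ring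
      _ ≤ (α * R * Real.sinh (α * R) / 2 + c) / c ^ 2 := by
          gcongr
          linarith
      _ = (α * R * Real.sinh (α * R) / 2 + Real.cosh (α * R) - 1) / c ^ 2 := by
          rw [hc]; ring_nf
  · refine ⟨81 * α + 324, by linarith, fun R hR => ?_⟩
    set x := α * R with hx
    have hx0 : 1 / 2 < x := by
      have : α ≤ x := by nlinarith
      linarith
    have hex : (0:ℝ) < Real.exp x := Real.exp_pos x
    -- cosh x - 1 ≥ exp x / 18
    have hden : Real.exp x / 18 ≤ Real.cosh x - 1 := by
      have h1 : Real.exp (-x) ≤ 2 / 3 := by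
        have h2 : (3:ℝ) / 2 ≤ Real.exp (1/2) := by
          have := Real.add_one_le_exp (1/2 : ℝ)
          linarith
        have h3 : Real.exp (1/2) ≤ Real.exp x := Real.exp_le_exp.2 (by linarith)
        have h4 : Real.exp (-x) = 1 / Real.exp x := by
          rw [Real.exp_neg]; ring
        rw [h4]
        rw [div_le_div_iff₀ hex (by norm_num)]
        nlinarith
      rw [Real.cosh_eq]
      have h5 : Real.exp x * Real.exp (-x) = 1 := by
        rw [← Real.exp_add]; simp
      nlinarith [Real.exp_pos (-x)]
    have hden2 : Real.exp x / 18 ≤ Real.cosh x - 1 := hden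
    have hdenpos : (0:ℝ) < Real.cosh x - 1 := lt_of_lt_of_le (by positivity) hden
    -- numerator bound
    have hsinh : Real.sinh x ≤ Real.exp x / 2 := by
      rw [Real.sinh_eq]
      nlinarith [Real.exp_pos (-x)]
    have hcosh : Real.cosh x ≤ Real.exp x := by
      rw [Real.cosh_eq]
      have : Real.exp (-x) ≤ Real.exp x := Real.exp_le_exp.2 (by linarith)
      linarith
    have hnum : α * R * Real.sinh x / 2 + Real.cosh x - 1
        ≤ R * (α / 4 + 1) * Real.exp x := by
      have h6 : α * R * Real.sinh x / 2 ≤ x * (Real.exp x / 2) / 2 := by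
        rw [← hx]
        have hx0' : 0 < x := by linarith
        nlinarith
      have h7 : x * (Real.exp x / 2) / 2 = R * (α/4) * Real.exp x := by
        rw [hx]; ring
      have h8 : Real.cosh x ≤ R * Real.exp x := by
        calc Real.cosh x ≤ Real.exp x := hcosh
          _ ≤ R * Real.exp x := by nlinarith
      nlinarith
    have hnum0 : 0 ≤ R * (α / 4 + 1) * Real.exp x := by positivity
    have hBpos : (0:ℝ) < (Real.exp x / 18) ^ 2 := by positivity
    have hstep : (α * R * Real.sinh x / 2 + Real.cosh x - 1) / (Real.cosh x - 1) ^ 2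
        ≤ (R * (α / 4 + 1) * Real.exp x) / ((Real.exp x / 18) ^ 2) := by
      apply div_le_div₀ hnum0 hnum hBpos
      exact pow_le_pow_left₀ (by positivity) hden2 2
    refine hstep.trans (le_of_eq ?_)
    have hxe : Real.exp (-α * R) = (Real.exp x)⁻¹ := by
      rw [hx, neg_mul, Real.exp_neg]
    rw [hxe]
    field_simp
    ring
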